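/- Let $A$ be a totally unimodular $m \times d$ integer matrix, let $b \in \mathbb{Z}^m$, and let $n$ be a positive integer. If the set $F := \{(x^1, \dots, x^n) : x^k \in \{0,1\}^d,\, A x^k = b \text{ for } k = 1, \dots, n\}$ is nonempty, then the minimum of $|x^1 \wedge \cdots \wedge x^n|$ over $(x^1, \dots, x^n) \in F$ equals the minimum of $|z|$ over all pairs $(y, z)$ with $y \in \mathbb{Z}^d$, $0 \le y_j \le n-1$ for all $j$, $z \in \{0,1\}^d$, and $A(y+z) = n \cdot b$. -/

import Mathlib

open scoped Classical
open Matrix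

private lemma intsol_injective {m k : ℕ} (B : Matrix (Fin m) (Fin k) ℤ)
    (hB : B.IsTotallyUnimodular) (v : Fin k → ℚ) (c : Fin m → ℤ)
    (hv : (B.map (Int.cast : ℤ → ℚ)).mulVec v = fun i => (c i : ℚ))
    (hinj : Function.Injective (B.map (Int.cast : ℤ → ℚ)).mulVec) :
    ∀ j, ∃ z : ℤ, (z : ℚ) = v j := by
  set Bq := B.map (Int.cast : ℤ → ℚ) with hBq
  have hrank : Matrix.rank Bq = k := by
    rw [Matrix.rank, LinearMap.finrank_range_of_inj]
    · exact Module.finrank_fin_fun ℚ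
    · exact hinj
  have hrankT : Matrix.rank Bqᵀ = k := by rw [Matrix.rank_transpose]; exact hrank
  have hspan : Submodule.span ℚ (Set.range (fun i => Bq i)) = ⊤ := by
    have h0 : Submodule.span ℚ (Set.range Bqᵀᵀ) = LinearMap.range (Matrix.mulVecLin Bqᵀ) :=
      (Matrix.range_mulVecLin Bqᵀ).symm
    rw [Matrix.transpose_transpose] at h0
    have h2 : Module.finrank ℚ (Submodule.span ℚ (Set.range (fun i => Bq i))) = k := by
      rw [show (fun i => Bq i) = Bq from rfl, h0]
      exact hrankT
    apply Submodule.eq_top_of_finrank_eq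
    rw [h2, Module.finrank_fin_fun]
  obtain ⟨s, hs_sub, hs_span, hs_li⟩ := exists_linearIndependent ℚ (Set.range (fun i => Bq i))
  rw [hspan] at hs_span
  have hs_fin : s.Finite := Set.Finite.subset (Set.finite_range _) hs_sub
  haveI : Fintype s := hs_fin.fintype
  have bas : Module.Basis s ℚ (Fin k → ℚ) := Module.Basis.mk hs_li (by rw [Subtype.range_coe]; exact hs_span.ge)
  have hcard : Fintype.card s = k := by
    have := Module.finrank_eq_card_basis bas
    rw [Module.finrank_fin_fun] at this
    omega
  have e : Fin k ≃ s := (Fintype.equivFinOfCardEq hcard).symm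
  have hr : ∀ a : Fin k, ∃ i : Fin m, Bq i = (e a : Fin k → ℚ) := fun a => hs_sub (e a).2
  choose r hr using hr
  have hr_inj : Function.Injective r := by
    intro a a' h
    apply e.injective
    apply Subtype.ext
    rw [← hr a, ← hr a', h]
  set M := B.submatrix r id with hM
  have hMqli : LinearIndependent ℚ (fun a => (M.map (Int.cast : ℤ → ℚ)) a) := by
    have h3 : (fun a => (M.map (Int.cast : ℤ → ℚ)) a) = (Subtype.val ∘ e) := by
      funext a; exact hr a
    rw [h3]
    exact hs_li.comp e e.injective
  have hMq_unit : IsUnit (M.map (Int.cast : ℤ → ℚ)) :=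
    Matrix.linearIndependent_rows_iff_isUnit.mp hMqli
  have hdet_ne : (M.map (Int.cast : ℤ → ℚ)).det ≠ 0 := by
    intro h
    exact ((Matrix.isUnit_iff_isUnit_det _).mp hMq_unit).ne_zero h
  have hdet_cast : ((M.det : ℤ) : ℚ) = (M.map (Int.cast : ℤ → ℚ)).det :=
    RingHom.map_det (Int.castRingHom ℚ) M
  have hdetM : M.det = 1 ∨ M.det = -1 := by
    obtain ⟨sg, hsg⟩ := hB k r id hr_inj Function.injective_id
    rw [← hM] at hsg
    cases sg with
    | zero => exfalso; apply hdet_ne; rw [← hdet_cast, ← hsg]; simp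
    | pos => left; rw [← hsg]; simp
    | neg => right; rw [← hsg]; simp
  have hdet_sq : M.det * M.det = 1 := by rcases hdetM with h | h <;> rw [h] <;> ring
  have hMv : (M.map (Int.cast : ℤ → ℚ)).mulVec v = fun i => ((c (r i) : ℤ) : ℚ) := by
    funext i
    have := congrFun hv (r i)
    simpa [hBq, hM, Matrix.mulVec, dotProduct, Matrix.submatrix] using this
  intro j
  have hadj : (M.map (Int.cast : ℤ → ℚ)).adjugate = (M.adjugate).map (Int.cast : ℤ → ℚ) :=
    (RingHom.map_adjugate (Int.castRingHom ℚ) M).symm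
  have key : (M.det : ℚ) * v j = (((M.adjugate.mulVec (fun i => c (r i))) j : ℤ) : ℚ) := by
    have h1 : ((M.map (Int.cast : ℤ → ℚ)).adjugate.mulVec ((M.map (Int.cast : ℤ → ℚ)).mulVec v)) j
        = ((M.map (Int.cast : ℤ → ℚ)).det • v) j := by
      rw [Matrix.mulVec_mulVec, Matrix.adjugate_mul, Matrix.smul_mulVec, Matrix.one_mulVec]
    rw [hMv] at h1
    have h2 : ((M.map (Int.cast : ℤ → ℚ)).adjugate.mulVec (fun i => ((c (r i) : ℤ) : ℚ))) j
        = (((M.adjugate.mulVec (fun i => c (r i))) j : ℤ) : ℚ) := by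
      rw [hadj]
      simp [Matrix.mulVec, dotProduct, Matrix.map_apply]
    rw [h2] at h1
    rw [h1, hdet_cast]
    simp [Pi.smul_apply, smul_eq_mul]
  refine ⟨M.det * (M.adjugate.mulVec (fun i => c (r i))) j, ?_⟩
  rw [Int.cast_mul]
  rw [← key]
  have h3 : ((M.det : ℤ) : ℚ) * ((M.det : ℤ) : ℚ) = 1 := by
    rw [← Int.cast_mul, hdet_sq]; exact Int.cast_one
  calc ((M.det : ℤ) : ℚ) * (((M.det : ℤ) : ℚ) * v j)
      = (((M.det : ℤ) : ℚ) * ((M.det : ℤ) : ℚ)) * v j := by ring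
    _ = v j := by rw [h3, one_mul]

private lemma cast_mulVec {m d : ℕ} (A : Matrix (Fin m) (Fin d) ℤ) (x : Fin d → ℤ) :
    (A.map (Int.cast : ℤ → ℚ)).mulVec (fun j => (x j : ℚ)) = fun i => ((A.mulVec x i : ℤ) : ℚ) := by
  funext i
  simp [Matrix.mulVec, dotProduct, Matrix.map]

private lemma sum_over_subset {d k : ℕ} (J : Finset (Fin d)) (hk : J.card = k)
    (F : Fin d → ℚ) (hF : ∀ j ∉ J, F j = 0) :
    ∑ j, F j = ∑ a : Fin k, F (J.orderEmbOfFin hk a) := by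
  have himg : Finset.image (J.orderEmbOfFin hk) Finset.univ = J := by
    apply Finset.coe_injective
    rw [Finset.coe_image, Finset.coe_univ, Set.image_univ, Finset.range_orderEmbOfFin]
  rw [← Finset.sum_subset (Finset.subset_univ J) (fun x _ hx => hF x hx)]
  conv_lhs => rw [← himg]
  rw [Finset.sum_image (fun a _ b _ h => (J.orderEmbOfFin hk).injective h)]

private lemma intsol {m d : ℕ} (A : Matrix (Fin m) (Fin d) ℤ) (hA : A.IsTotallyUnimodular)
    (b : Fin m → ℤ) (l u : Fin d → ℤ) :
    ∀ N : ℕ, ∀ f : Fin d → ℚ,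
      (Finset.univ.filter (fun j => ¬ ∃ z : ℤ, (z : ℚ) = f j)).card ≤ N →
      (A.map (Int.cast : ℤ → ℚ)).mulVec f = (fun i => (b i : ℚ)) →
      (∀ j, (l j : ℚ) ≤ f j ∧ f j ≤ (u j : ℚ)) →
      ∃ x : Fin d → ℤ, A.mulVec x = b ∧ ∀ j, l j ≤ x j ∧ x j ≤ u j := by
  intro N
  induction N with
  | zero =>
    intro f hcard hf hbnd
    have hall : ∀ j, ∃ z : ℤ, (z : ℚ) = f j := by
      intro j
      by_contra h
      have hmem : j ∈ Finset.univ.filter (fun j => ¬ ∃ z : ℤ, (z : ℚ) = f j) := by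
        simp only [Finset.mem_filter, Finset.mem_univ, true_and]; exact h
      have := Finset.card_pos.mpr ⟨j, hmem⟩
      omega
    choose x hx using hall
    have hxf : (fun j => (x j : ℚ)) = f := funext hx
    refine ⟨x, ?_, ?_⟩
    · funext i
      have h1 := congrFun (cast_mulVec A x) i
      rw [hxf, hf] at h1
      have h2 : ((A.mulVec x i : ℤ) : ℚ) = ((b i : ℤ) : ℚ) := h1.symm
      exact_mod_cast h2
    · intro j
      constructor
      · have := (hbnd j).1; rw [← hx j] at this; exact_mod_cast this
      · have := (hbnd j).2; rw [← hx j] at this; exact_mod_cast this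
  | succ N ih =>
    intro f hcard hf hbnd
    set J := Finset.univ.filter (fun j => ¬ ∃ z : ℤ, (z : ℚ) = f j) with hJ
    by_cases hc : J.card ≤ N
    · exact ih f hc hf hbnd
    have hJcard : J.card = N + 1 := le_antisymm hcard (by omega)
    have hJne : J.Nonempty := Finset.card_pos.mp (by omega)
    have hfrac : ∀ j ∈ J, ¬ ∃ z : ℤ, (z : ℚ) = f j := by
      intro j hj
      simp only [hJ, Finset.mem_filter, Finset.mem_univ, true_and] at hj
      exact hj
    have hfloor : ∀ j ∈ J, (⌊f j⌋ : ℚ) < f j := by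
      intro j hj
      rcases lt_or_eq_of_le (Int.floor_le (f j)) with h | h
      · exact h
      · exact absurd ⟨⌊f j⌋, h⟩ (hfrac j hj)
    have hceil : ∀ j ∈ J, f j < (⌈f j⌉ : ℚ) := by
      intro j hj
      rcases lt_or_eq_of_le (Int.le_ceil (f j)) with h | h
      · exact h
      · exact absurd ⟨⌈f j⌉, h.symm⟩ (hfrac j hj)
    by_cases hker : ∃ g : Fin d → ℚ, g ≠ 0 ∧ (∀ j, j ∉ J → g j = 0) ∧
        (A.map (Int.cast : ℤ → ℚ)).mulVec g = 0
    · obtain ⟨g, hg0, hgsupp, hgker⟩ := hker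
      set s := Finset.univ.filter (fun j => g j ≠ 0) with hs
      have hsne : s.Nonempty := by
        rcases Function.ne_iff.mp hg0 with ⟨j, hj⟩
        exact ⟨j, by simp only [hs, Finset.mem_filter, Finset.mem_univ, true_and]; exact hj⟩
      have hsJ : ∀ j ∈ s, j ∈ J := by
        intro j hj
        simp only [hs, Finset.mem_filter, Finset.mem_univ, true_and] at hj
        by_contra h
        exact hj (hgsupp j h)
      set τ : Fin d → ℚ := fun j =>
        if 0 < g j then ((⌈f j⌉ : ℚ) - f j) / g j else ((⌊f j⌋ : ℚ) - f j) / g j with hτ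
      have hτnonneg : ∀ j ∈ s, 0 ≤ τ j := by
        intro j hj
        have hgj : g j ≠ 0 := by
          simp only [hs, Finset.mem_filter, Finset.mem_univ, true_and] at hj; exact hj
        have hjJ := hsJ j hj
        simp only [hτ]
        by_cases hpos : 0 < g j
        · rw [if_pos hpos]
          exact div_nonneg (by linarith [hceil j hjJ]) hpos.le
        · rw [if_neg hpos]
          have hneg : g j < 0 := lt_of_le_of_ne (not_lt.mp hpos) hgj
          rw [div_nonneg_iff]
          right
          exact ⟨by linarith [hfloor j hjJ], hneg.le⟩
      set t := s.inf' hsne τ with ht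
      have ht0 : 0 ≤ t := Finset.le_inf' hsne τ hτnonneg
      obtain ⟨j1, hj1s, hj1⟩ := Finset.exists_mem_eq_inf' hsne τ
      set f' := fun j => f j + t * g j with hf'
      -- value of f' at j ∈ s, per sign of g j
      have hub : ∀ j ∈ s, 0 < g j → f' j ≤ (⌈f j⌉ : ℚ) := by
        intro j hj hpos
        have hti : t ≤ τ j := Finset.inf'_le τ hj
        have : t * g j ≤ τ j * g j := mul_le_mul_of_nonneg_right hti hpos.le
        have hτj : τ j * g j = (⌈f j⌉ : ℚ) - f j := by
          simp only [hτ, if_pos hpos]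
          exact div_mul_cancel₀ _ (ne_of_gt hpos)
        simp only [hf']
        linarith
      have hlb : ∀ j ∈ s, g j < 0 → (⌊f j⌋ : ℚ) ≤ f' j := by
        intro j hj hneg
        have hti : t ≤ τ j := Finset.inf'_le τ hj
        have : τ j * g j ≤ t * g j := mul_le_mul_of_nonpos_right hti hneg.le
        have hτj : τ j * g j = (⌊f j⌋ : ℚ) - f j := by
          simp only [hτ, if_neg (not_lt.mpr hneg.le)]
          exact div_mul_cancel₀ _ (ne_of_lt hneg)
        simp only [hf']
        linarith
      have hbnd' : ∀ j, (l j : ℚ) ≤ f' j ∧ f' j ≤ (u j : ℚ) := by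
        intro j
        by_cases hgj : g j = 0
        · simp only [hf', hgj, mul_zero, add_zero]; exact hbnd j
        have hjs : j ∈ s := by
          simp only [hs, Finset.mem_filter, Finset.mem_univ, true_and]; exact hgj
        have hjJ := hsJ j hjs
        by_cases hpos : 0 < g j
        · constructor
          · have : 0 ≤ t * g j := mul_nonneg ht0 hpos.le
            have := (hbnd j).1
            simp only [hf']; linarith
          · have h1 := hub j hjs hpos
            have h2 : (⌈f j⌉ : ℤ) ≤ u j := Int.ceil_le.mpr (hbnd j).2
            have h3 : ((⌈f j⌉ : ℤ) : ℚ) ≤ (u j : ℚ) := by exact_mod_cast h2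
            linarith
        · have hneg : g j < 0 := lt_of_le_of_ne (not_lt.mp hpos) hgj
          constructor
          · have h1 := hlb j hjs hneg
            have h2 : l j ≤ (⌊f j⌋ : ℤ) := Int.le_floor.mpr (hbnd j).1
            have h3 : (l j : ℚ) ≤ ((⌊f j⌋ : ℤ) : ℚ) := by exact_mod_cast h2
            linarith
          · have : t * g j ≤ 0 := mul_nonpos_of_nonneg_of_nonpos ht0 hneg.le
            have := (hbnd j).2
            simp only [hf']; linarith
      have hj1int : ∃ z : ℤ, (z : ℚ) = f' j1 := by
        have hgj1 : g j1 ≠ 0 := by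
          simp only [hs, Finset.mem_filter, Finset.mem_univ, true_and] at hj1s; exact hj1s
        have htj1 : t = τ j1 := by rw [ht]; exact hj1
        by_cases hpos : 0 < g j1
        · refine ⟨⌈f j1⌉, ?_⟩
          simp only [hf', htj1, hτ, if_pos hpos]
          rw [div_mul_cancel₀ _ hgj1]
          ring
        · refine ⟨⌊f j1⌋, ?_⟩
          simp only [hf', htj1, hτ, if_neg hpos]
          rw [div_mul_cancel₀ _ hgj1]
          ring
      have hsub : (Finset.univ.filter (fun j => ¬ ∃ z : ℤ, (z : ℚ) = f' j)) ⊆ J.erase j1 := by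
        intro j hj
        simp only [Finset.mem_filter, Finset.mem_univ, true_and] at hj
        refine Finset.mem_erase.mpr ⟨?_, ?_⟩
        · rintro rfl
          exact hj hj1int
        · by_cases hgj : g j = 0
          · have : f' j = f j := by simp only [hf', hgj, mul_zero, add_zero]
            rw [this] at hj
            simp only [hJ, Finset.mem_filter, Finset.mem_univ, true_and]
            exact hj
          · exact hsJ j (by simp only [hs, Finset.mem_filter, Finset.mem_univ, true_and]; exact hgj)
      have hcard' : (Finset.univ.filter (fun j => ¬ ∃ z : ℤ, (z : ℚ) = f' j)).card ≤ N := by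
        have h1 := Finset.card_le_card hsub
        have h2 : (J.erase j1).card = J.card - 1 := Finset.card_erase_of_mem (hsJ j1 hj1s)
        omega
      have hf'sol : (A.map (Int.cast : ℤ → ℚ)).mulVec f' = (fun i => (b i : ℚ)) := by
        have heq : f' = f + t • g := by funext j; simp [hf', Pi.add_apply, Pi.smul_apply, smul_eq_mul]
        rw [heq, Matrix.mulVec_add, Matrix.mulVec_smul, hgker, hf]
        funext i
        simp
      exact ih f' hcard' hf'sol hbnd'
    · -- injective case: contradiction
      exfalso
      push_neg at hker
      set emb := J.orderEmbOfFin (rfl : J.card = J.card) with hemb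
      have hembmem : ∀ a, emb a ∈ J := fun a => Finset.orderEmbOfFin_mem J rfl a
      have hembsurj : ∀ j ∈ J, ∃ a, emb a = j := by
        intro j hj
        have : (j : Fin d) ∈ Set.range ⇑emb := by
          rw [hemb, Finset.range_orderEmbOfFin]
          exact hj
        exact this
      set B := A.submatrix id (⇑emb) with hB
      have hBTU : B.IsTotallyUnimodular := hA.submatrix id ⇑emb
      -- the integral part of f
      set w0 : Fin d → ℤ := fun j =>
        if h : ∃ z : ℤ, (z : ℚ) = f j then h.choose else 0 with hw0
      set w0' : Fin d → ℤ := fun j => if j ∈ J then 0 else w0 j with hw0'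
      have hw0'cast : ∀ j ∉ J, ((w0' j : ℤ) : ℚ) = f j := by
        intro j hj
        have hint : ∃ z : ℤ, (z : ℚ) = f j := by
          by_contra h
          exact hj (by simp only [hJ, Finset.mem_filter, Finset.mem_univ, true_and]; exact h)
        simp only [hw0', if_neg hj, hw0, dif_pos hint]
        exact hint.choose_spec
      set fJ : Fin d → ℚ := fun j => if j ∈ J then f j else 0 with hfJ
      set c : Fin m → ℤ := fun i => b i - A.mulVec w0' i with hc
      -- B (map cast) mulVec of (f ∘ emb) equals cast c
      have hsplit : ∀ i, (A.map (Int.cast : ℤ → ℚ)).mulVec fJ i = ((c i : ℤ) : ℚ) := by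
        intro i
        have h1 : ∀ j, (A.map (Int.cast : ℤ → ℚ)) i j * fJ j
            = (A.map (Int.cast : ℤ → ℚ)) i j * f j
              - (A.map (Int.cast : ℤ → ℚ)) i j * ((w0' j : ℤ) : ℚ) := by
          intro j
          by_cases hj : j ∈ J
          · simp only [hfJ, if_pos hj, hw0', if_pos hj, Int.cast_zero, mul_zero, sub_zero]
          · simp only [hfJ, if_neg hj, hw0'cast j hj, mul_zero]
            ring
        have h2 : (A.map (Int.cast : ℤ → ℚ)).mulVec fJ i
            = (A.map (Int.cast : ℤ → ℚ)).mulVec f i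
              - (A.map (Int.cast : ℤ → ℚ)).mulVec (fun j => ((w0' j : ℤ) : ℚ)) i := by
          simp only [Matrix.mulVec, dotProduct]
          rw [← Finset.sum_sub_distrib]
          exact Finset.sum_congr rfl (fun j _ => h1 j)
        rw [h2, hf, congrFun (cast_mulVec A w0') i]
        simp only [hc]
        push_cast
        ring
      have hinj : Function.Injective (B.map (Int.cast : ℤ → ℚ)).mulVec := by
        intro w w' hww
        set u : Fin J.card → ℚ := w - w' with hu
        have hzero : (B.map (Int.cast : ℤ → ℚ)).mulVec u = 0 := by
          rw [hu, Matrix.mulVec_sub, hww, sub_self]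
        set g0 : Fin d → ℚ := Function.extend (⇑emb) u 0 with hg0
        have hg0supp : ∀ j, j ∉ J → g0 j = 0 := by
          intro j hj
          have hne : ¬ ∃ a, emb a = j := by
            rintro ⟨a, ha⟩; exact hj (ha ▸ hembmem a)
          rw [hg0, Function.extend_apply' _ _ _ hne]
          rfl
        have hg0emb : ∀ a, g0 (emb a) = u a := fun a => by
          rw [hg0]; exact Function.Injective.extend_apply emb.injective _ _ _
        have hg0ker : (A.map (Int.cast : ℤ → ℚ)).mulVec g0 = 0 := by
          funext i
          have hsum : ∑ j, (A.map (Int.cast : ℤ → ℚ)) i j * g0 j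
              = ∑ a : Fin J.card, (A.map (Int.cast : ℤ → ℚ)) i (emb a) * g0 (emb a) :=
            sum_over_subset J rfl _ (fun j hj => by rw [hg0supp j hj, mul_zero])
          have h1 : (A.map (Int.cast : ℤ → ℚ)).mulVec g0 i
              = (B.map (Int.cast : ℤ → ℚ)).mulVec u i := by
            simp only [Matrix.mulVec, dotProduct]
            rw [hsum]
            exact Finset.sum_congr rfl (fun a _ => by rw [hg0emb a]; rfl)
          rw [h1, hzero]
        have hg00 : g0 = 0 := by
          by_contra hne
          exact hker g0 hne hg0supp hg0ker
        have hu0 : u = 0 := by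
          funext a
          rw [← hg0emb a, hg00]
          rfl
        have : w - w' = 0 := hu0
        exact sub_eq_zero.mp this
      have hveq : (B.map (Int.cast : ℤ → ℚ)).mulVec (fun a => f (emb a))
          = fun i => ((c i : ℤ) : ℚ) := by
        funext i
        have hsum : ∑ j, (A.map (Int.cast : ℤ → ℚ)) i j * fJ j
            = ∑ a : Fin J.card, (A.map (Int.cast : ℤ → ℚ)) i (emb a) * fJ (emb a) :=
          sum_over_subset J rfl _ (fun j hj => by simp only [hfJ, if_neg hj, mul_zero])
        have h1 : (B.map (Int.cast : ℤ → ℚ)).mulVec (fun a => f (emb a)) i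
            = (A.map (Int.cast : ℤ → ℚ)).mulVec fJ i := by
          simp only [Matrix.mulVec, dotProduct]
          rw [hsum]
          refine (Finset.sum_congr rfl (fun a _ => ?_)).symm
          simp only [hfJ, if_pos (hembmem a)]
          rfl
        rw [h1, hsplit i]
      have hv := intsol_injective B hBTU (fun a => f (emb a)) c hveq hinj
      obtain ⟨j0, hj0⟩ := hJne
      obtain ⟨a0, ha0⟩ := hembsurj j0 hj0
      exact hfrac j0 hj0 (ha0 ▸ hv a0)

private lemma decomposition {m d : ℕ} (A : Matrix (Fin m) (Fin d) ℤ)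
    (hA : A.IsTotallyUnimodular) (b : Fin m → ℤ) :
    ∀ n : ℕ, ∀ w : Fin d → ℤ, (∀ j, 0 ≤ w j ∧ w j ≤ (n : ℤ)) →
      A.mulVec w = (n : ℤ) • b →
      ∃ x : Fin n → Fin d → ℤ, (∀ k j, x k j = 0 ∨ x k j = 1) ∧
        (∀ k, A.mulVec (x k) = b) ∧ (∀ j, ∑ k, x k j = w j) := by
  intro n
  induction n with
  | zero =>
    intro w hw _
    refine ⟨fun k => k.elim0, fun k => k.elim0, fun k => k.elim0, fun j => ?_⟩
    have := hw j
    simp only [Nat.cast_zero] at this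
    simp only [Finset.univ_eq_empty, Finset.sum_empty]
    omega
  | succ n ih =>
    intro w hw hsol
    set l : Fin d → ℤ := fun j => max 0 (w j - n) with hl
    set uu : Fin d → ℤ := fun j => min 1 (w j) with huu
    set f : Fin d → ℚ := fun j => (w j : ℚ) / ((n : ℚ) + 1) with hf
    have hn1 : (0 : ℚ) < (n : ℚ) + 1 := by positivity
    have hfsol : (A.map (Int.cast : ℤ → ℚ)).mulVec f = fun i => (b i : ℚ) := by
      funext i
      have hc := congrFun (cast_mulVec A w) i
      have hval : ((A.mulVec w i : ℤ) : ℚ) = ((n : ℚ) + 1) * (b i : ℚ) := by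
        rw [hsol]
        push_cast [Pi.smul_apply, smul_eq_mul]
        ring
      have hexp : (A.map (Int.cast : ℤ → ℚ)).mulVec f i
          = ((A.map (Int.cast : ℤ → ℚ)).mulVec (fun j => (w j : ℚ)) i) / ((n : ℚ) + 1) := by
        simp only [Matrix.mulVec, dotProduct, hf]
        rw [Finset.sum_div]
        exact Finset.sum_congr rfl (fun j _ => by ring)
      rw [hexp, hc, hval]
      field_simp
    have hfbnd : ∀ j, (l j : ℚ) ≤ f j ∧ f j ≤ (uu j : ℚ) := by
      intro j
      obtain ⟨h0, h1⟩ := hw j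
      have h0q : (0 : ℚ) ≤ (w j : ℚ) := by exact_mod_cast h0
      have h1q : (w j : ℚ) ≤ (n : ℚ) + 1 := by
        have : (w j : ℚ) ≤ (((n : ℕ) + 1 : ℤ) : ℚ) := by exact_mod_cast h1
        push_cast at this
        linarith
      have hnq : (0 : ℚ) ≤ (n : ℚ) := Nat.cast_nonneg n
      constructor
      · simp only [hl, hf]
        push_cast
        apply max_le
        · positivity
        · rw [le_div_iff₀ hn1]
          nlinarith
      · simp only [huu, hf]
        push_cast
        apply le_min
        · rw [div_le_one hn1]
          exact h1q
        · rw [div_le_iff₀ hn1]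
          nlinarith
    obtain ⟨x0, hx0sol, hx0bnd⟩ := intsol A hA b l uu d f
      (le_trans (Finset.card_filter_le _ _) (by simp)) hfsol hfbnd
    have hx0bin : ∀ j, x0 j = 0 ∨ x0 j = 1 := by
      intro j
      obtain ⟨hb1, hb2⟩ := hx0bnd j
      have h1 : (0 : ℤ) ≤ l j := le_max_left _ _
      have h2 : uu j ≤ 1 := min_le_left _ _
      omega
    set w' : Fin d → ℤ := w - x0 with hw'
    have hw'bnd : ∀ j, 0 ≤ w' j ∧ w' j ≤ (n : ℤ) := by
      intro j
      obtain ⟨hb1, hb2⟩ := hx0bnd j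
      have h1 : w j - (n : ℤ) ≤ l j := le_max_right _ _
      have h2 : uu j ≤ w j := min_le_right _ _
      have := hw j
      simp only [hw', Pi.sub_apply]
      omega
    have hw'sol : A.mulVec w' = (n : ℤ) • b := by
      rw [hw', Matrix.mulVec_sub, hsol, hx0sol]
      funext i
      simp only [Pi.sub_apply, Pi.smul_apply, smul_eq_mul]
      push_cast
      ring
    obtain ⟨x', hx'bin, hx'sol, hx'sum⟩ := ih w' hw'bnd hw'sol
    refine ⟨Fin.cons x0 x', ?_, ?_, ?_⟩
    · intro k j
      refine Fin.cases ?_ ?_ k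
      · exact hx0bin j
      · intro k'; exact hx'bin k' j
    · intro k
      refine Fin.cases ?_ ?_ k
      · exact hx0sol
      · intro k'; exact hx'sol k'
    · intro j
      rw [Fin.sum_univ_succ]
      simp only [Fin.cons_zero, Fin.cons_succ]
      rw [hx'sum j]
      simp only [hw', Pi.sub_apply]
      ring

/-- **Corollary 1 (via the auxiliary program).** If `F = {(x¹,…,xⁿ) : xᵏ ∈ {0,1}^d,
Axᵏ = b ∀k}` is nonempty, then the minimum of `|x¹ ∧ ⋯ ∧ xⁿ|` over `F` equals the minimum
of `|z|` over all `(y, z)` with `y ∈ {0,…,n-1}^d`, `z ∈ {0,1}^d`, `A(y+z) = n·b`. -/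
theorem min_wedge_eq_min_auxiliary (m d n : ℕ) (hn : 0 < n)
    (A : Matrix (Fin m) (Fin d) ℤ) (hA : A.IsTotallyUnimodular)
    (b : Fin m → ℤ)
    (hF : ∃ x : Fin n → Fin d → ℤ,
      (∀ k j, x k j = 0 ∨ x k j = 1) ∧ ∀ k, A.mulVec (x k) = b) :
    ∃ v : ℤ,
      IsLeast {v' : ℤ | ∃ x : Fin n → Fin d → ℤ,
        (∀ k j, x k j = 0 ∨ x k j = 1) ∧ (∀ k, A.mulVec (x k) = b) ∧
        v' = ∑ j, |Finset.univ.inf' (Finset.univ_nonempty_iff.mpr ⟨⟨0, hn⟩⟩)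
          (fun k => x k j)|} v ∧
      IsLeast {v' : ℤ | ∃ y z : Fin d → ℤ,
        (∀ j, 0 ≤ y j ∧ y j ≤ (n : ℤ) - 1) ∧
        (∀ j, z j = 0 ∨ z j = 1) ∧
        A.mulVec (fun j => y j + z j) = (n : ℤ) • b ∧
        v' = ∑ j, |z j|} v := by
  have hne : (Finset.univ : Finset (Fin n)).Nonempty := Finset.univ_nonempty_iff.mpr ⟨⟨0, hn⟩⟩
  -- from a feasible x, a feasible (y, z) with the same value
  have h12 : ∀ x : Fin n → Fin d → ℤ, (∀ k j, x k j = 0 ∨ x k j = 1) →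
      (∀ k, A.mulVec (x k) = b) →
      ∃ y z : Fin d → ℤ, (∀ j, 0 ≤ y j ∧ y j ≤ (n : ℤ) - 1) ∧ (∀ j, z j = 0 ∨ z j = 1) ∧
        A.mulVec (fun j => y j + z j) = (n : ℤ) • b ∧
        (∑ j, |z j|) = ∑ j, |Finset.univ.inf' hne (fun k => x k j)| := by
    intro x hbin hsol
    set z : Fin d → ℤ := fun j => Finset.univ.inf' hne (fun k => x k j) with hz
    set y : Fin d → ℤ := fun j => (∑ k, x k j) - z j with hy
    have hzle : ∀ j k, z j ≤ x k j := fun j k => Finset.inf'_le _ (Finset.mem_univ k)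
    have hzwit : ∀ j, ∃ k0, z j = x k0 j := by
      intro j
      obtain ⟨k0, _, hk0⟩ := Finset.exists_mem_eq_inf' hne (fun k => x k j)
      exact ⟨k0, hk0⟩
    have hzbin : ∀ j, z j = 0 ∨ z j = 1 := by
      intro j
      obtain ⟨k0, hk0⟩ := hzwit j
      rw [hk0]
      exact hbin k0 j
    have hsumn1 : ∀ j, (∀ k, x k j = 1) → ∑ k, x k j = (n : ℤ) := by
      intro j hall
      rw [Finset.sum_congr rfl (fun k _ => hall k)]
      simp [Finset.card_univ]
    have hybnd : ∀ j, 0 ≤ y j ∧ y j ≤ (n : ℤ) - 1 := by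
      intro j
      obtain ⟨k0, hk0⟩ := hzwit j
      constructor
      · have hterm : ∀ k ∈ Finset.univ, (0 : ℤ) ≤ x k j := fun k _ => by
          rcases hbin k j with h | h <;> omega
        have hle : x k0 j ≤ ∑ k, x k j := Finset.single_le_sum hterm (Finset.mem_univ k0)
        simp only [hy]
        omega
      · rcases hzbin j with h0 | h1
        · have h1' : ∑ k, x k j = x k0 j + ∑ k ∈ Finset.univ.erase k0, x k j :=
            (Finset.add_sum_erase _ _ (Finset.mem_univ k0)).symm
          have h2 : ∑ k ∈ Finset.univ.erase k0, x k j ≤ (Finset.univ.erase k0).card • (1 : ℤ) :=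
            Finset.sum_le_card_nsmul _ _ 1 (fun k _ => by rcases hbin k j with h | h <;> omega)
          rw [Finset.card_erase_of_mem (Finset.mem_univ k0), Finset.card_univ,
            Fintype.card_fin, nsmul_eq_mul, mul_one] at h2
          have hx0 : x k0 j = 0 := by rw [← hk0]; exact h0
          simp only [hy]
          omega
        · have hall : ∀ k, x k j = 1 := by
            intro k
            have := hzle j k
            rcases hbin k j with h | h <;> omega
          have := hsumn1 j hall
          simp only [hy]
          omega
    refine ⟨y, z, hybnd, hzbin, ?_, rfl⟩
    have heq : (fun j => y j + z j) = fun j => ∑ k, x k j := by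
      funext j
      simp only [hy]
      ring
    rw [heq]
    funext i
    have hswap : A.mulVec (fun j => ∑ k, x k j) i = ∑ k, A.mulVec (x k) i := by
      simp only [Matrix.mulVec, dotProduct, Finset.mul_sum]
      exact Finset.sum_comm
    rw [hswap, Finset.sum_congr rfl (fun k _ => congrFun (hsol k) i)]
    simp [Finset.card_univ, mul_comm]
  -- from a feasible (y, z), a feasible x with value at most |z|
  have h21 : ∀ y z : Fin d → ℤ, (∀ j, 0 ≤ y j ∧ y j ≤ (n : ℤ) - 1) →
      (∀ j, z j = 0 ∨ z j = 1) → A.mulVec (fun j => y j + z j) = (n : ℤ) • b →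
      ∃ x : Fin n → Fin d → ℤ, (∀ k j, x k j = 0 ∨ x k j = 1) ∧ (∀ k, A.mulVec (x k) = b) ∧
        (∑ j, |Finset.univ.inf' hne (fun k => x k j)|) ≤ ∑ j, |z j| := by
    intro y z hy hzbin hsol
    obtain ⟨x, hbin, hxsol, hxsum⟩ := decomposition A hA b n (fun j => y j + z j)
      (fun j => by
        obtain ⟨h1, h2⟩ := hy j
        have : 0 ≤ y j + z j ∧ y j + z j ≤ (n : ℤ) := by rcases hzbin j with h | h <;> omega
        exact this) hsol
    refine ⟨x, hbin, hxsol, Finset.sum_le_sum (fun j _ => ?_)⟩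
    obtain ⟨k0, _, hk0⟩ := Finset.exists_mem_eq_inf' hne (fun k => x k j)
    rcases hbin k0 j with h0 | h1
    · rw [hk0, h0]
      simp [abs_nonneg]
    · have hinf1 : Finset.univ.inf' hne (fun k => x k j) = 1 := by rw [hk0, h1]
      have hall : ∀ k, x k j = 1 := by
        intro k
        have hle : Finset.univ.inf' hne (fun k => x k j) ≤ x k j :=
          Finset.inf'_le _ (Finset.mem_univ k)
        rcases hbin k j with h | h <;> omega
      have hsumn : ∑ k, x k j = (n : ℤ) := by
        rw [Finset.sum_congr rfl (fun k _ => hall k)]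
        simp [Finset.card_univ]
      have hz1 : z j = 1 := by
        have h1' := hxsum j
        have h2' := hy j
        rcases hzbin j with h | h
        · omega
        · exact h
      rw [hinf1, hz1]
  -- least elements
  obtain ⟨x₀, hx₀bin, hx₀sol⟩ := hF
  obtain ⟨v1, hv1mem, hv1lb⟩ := Int.exists_least_of_bdd
    (P := fun v' => ∃ x : Fin n → Fin d → ℤ,
      (∀ k j, x k j = 0 ∨ x k j = 1) ∧ (∀ k, A.mulVec (x k) = b) ∧
      v' = ∑ j, |Finset.univ.inf' hne (fun k => x k j)|)
    ⟨0, fun v hv => by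
      obtain ⟨x, _, _, rfl⟩ := hv
      exact Finset.sum_nonneg (fun j _ => abs_nonneg _)⟩
    ⟨_, x₀, hx₀bin, hx₀sol, rfl⟩
  obtain ⟨x1, hx1bin, hx1sol, hv1val⟩ := hv1mem
  obtain ⟨y1, z1, hy1, hz1bin, hyz1sol, hz1val⟩ := h12 x1 hx1bin hx1sol
  obtain ⟨v2, hv2mem, hv2lb⟩ := Int.exists_least_of_bdd
    (P := fun v' => ∃ y z : Fin d → ℤ,
      (∀ j, 0 ≤ y j ∧ y j ≤ (n : ℤ) - 1) ∧ (∀ j, z j = 0 ∨ z j = 1) ∧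
      A.mulVec (fun j => y j + z j) = (n : ℤ) • b ∧ v' = ∑ j, |z j|)
    ⟨0, fun v hv => by
      obtain ⟨y, z, _, _, _, rfl⟩ := hv
      exact Finset.sum_nonneg (fun j _ => abs_nonneg _)⟩
    ⟨_, y1, z1, hy1, hz1bin, hyz1sol, rfl⟩
  -- v1 ∈ S2
  have hv1inS2 : ∃ y z : Fin d → ℤ,
      (∀ j, 0 ≤ y j ∧ y j ≤ (n : ℤ) - 1) ∧ (∀ j, z j = 0 ∨ z j = 1) ∧
      A.mulVec (fun j => y j + z j) = (n : ℤ) • b ∧ v1 = ∑ j, |z j| :=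
    ⟨y1, z1, hy1, hz1bin, hyz1sol, by rw [hv1val, ← hz1val]⟩
  have hv2le : v2 ≤ v1 := hv2lb v1 hv1inS2
  have hv1le : v1 ≤ v2 := by
    obtain ⟨y2, z2, hy2, hz2bin, hyz2sol, hv2val⟩ := hv2mem
    obtain ⟨x2, hx2bin, hx2sol, hx2le⟩ := h21 y2 z2 hy2 hz2bin hyz2sol
    calc v1 ≤ ∑ j, |Finset.univ.inf' hne (fun k => x2 k j)| :=
          hv1lb _ ⟨x2, hx2bin, hx2sol, rfl⟩
      _ ≤ ∑ j, |z2 j| := hx2le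
      _ = v2 := hv2val.symm
  refine ⟨v1, ⟨⟨x1, hx1bin, hx1sol, hv1val⟩, fun v hv => hv1lb v hv⟩,
    ⟨hv1inS2, fun v hv => hv1le.trans (hv2lb v hv)⟩⟩
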